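/- For integers s ≥ 1 and t ≥ 0, 2√π ∫_{-∞}^{∞} x φ^{(2s-1)}(x) φ^{(2t)}(x) dx = (-1)^{s-t} 2^{-(s+t)} (2s - 2t - 1) OF(2s + 2t - 2), where φ is the standard normal density and OF the odd factorial. -/

import Mathlib

open Real MeasureTheory Finset

noncomputable def stdNormalPDF (x : ℝ) : ℝ := (Real.sqrt (2 * Real.pi))⁻¹ * Real.exp (-x ^ 2 / 2)

def oddFactorial (r : ℕ) : ℝ := ∏ i ∈ Finset.range r, (2 * (i : ℝ) + 1)

section AuxAMPW

open Polynomial Filter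

noncomputable def Hr (n : ℕ) : ℝ[X] := (Polynomial.hermite n).map (Int.castRingHom ℝ)

lemma Hr_zero : Hr 0 = 1 := by simp [Hr]

lemma Hr_succ (n : ℕ) : Hr (n + 1) = X * Hr n - derivative (Hr n) := by
  simp [Hr, hermite_succ, Polynomial.map_sub, Polynomial.map_mul, derivative_map]

lemma Hr_deriv_aux : ∀ n : ℕ, derivative (Hr n) = C (n : ℝ) * Hr (n - 1) ∧
    derivative (Hr (n + 1)) = C ((n + 1 : ℕ) : ℝ) * Hr n := by
  intro n
  induction n with
  | zero =>
    constructor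
    · simp [Hr_zero]
    · have : Hr 1 = X := by simp [Hr, hermite_one]
      simp [this, Hr_zero]
  | succ n ih =>
    refine ⟨ih.2, ?_⟩
    rw [Hr_succ (n + 1), derivative_sub, derivative_mul, derivative_X, ih.2, one_mul,
      derivative_C_mul]
    rw [Hr_succ n]
    have h1 : (((n + 1 : ℕ) + 1 : ℕ) : ℝ) = ((n + 1 : ℕ) : ℝ) + 1 := by push_cast; ring
    rw [h1, map_add, C_1]
    ring

lemma Hr_deriv (n : ℕ) : derivative (Hr n) = C (n : ℝ) * Hr (n - 1) := (Hr_deriv_aux n).1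

lemma eval_Hr (n : ℕ) (x : ℝ) : eval x (Hr n) = aeval x (Polynomial.hermite n) := by
  rw [Hr, eval_map, aeval_def]
  rfl

lemma integrable_pow_gauss (n : ℕ) : Integrable fun x : ℝ => x ^ n * Real.exp (-x ^ 2) := by
  have h := integrable_rpow_mul_exp_neg_mul_sq (b := 1) one_pos
    (s := (n : ℝ)) (lt_of_lt_of_le neg_one_lt_zero (Nat.cast_nonneg n))
  simpa [Real.rpow_natCast, neg_mul, one_mul] using h

lemma integrable_poly_gauss (p : ℝ[X]) :
    Integrable fun x : ℝ => eval x p * Real.exp (-x ^ 2) := by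
  have h : (fun x : ℝ => eval x p * Real.exp (-x ^ 2)) =
      fun x : ℝ => ∑ i ∈ Finset.range (p.natDegree + 1),
        p.coeff i * (x ^ i * Real.exp (-x ^ 2)) := by
    funext x
    rw [eval_eq_sum_range, Finset.sum_mul]
    exact Finset.sum_congr rfl fun i _ => by ring
  rw [h]
  exact integrable_finset_sum _ fun i _ => (integrable_pow_gauss i).const_mul _

lemma tendsto_pow_gauss_top (n : ℕ) :
    Tendsto (fun x : ℝ => x ^ n * Real.exp (-x ^ 2)) atTop (nhds 0) := by
  have h := (rpow_mul_exp_neg_mul_sq_isLittleO_exp_neg one_pos (n : ℝ)).isBigO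
  have h2 : Tendsto (fun x : ℝ => Real.exp (-(1 / 2) * x)) atTop (nhds 0) := by
    apply Real.tendsto_exp_atBot.comp
    exact Tendsto.const_mul_atTop_of_neg (by norm_num) tendsto_id
  have h3 := h.trans_tendsto h2
  have h4 : (fun x : ℝ => x ^ (n : ℝ) * Real.exp (-1 * x ^ 2)) =ᶠ[atTop]
      fun x : ℝ => x ^ n * Real.exp (-x ^ 2) := by
    filter_upwards [eventually_ge_atTop (0 : ℝ)] with x hx
    rw [Real.rpow_natCast, neg_mul, one_mul]
  exact Tendsto.congr' h4 h3

lemma tendsto_poly_gauss_top (p : ℝ[X]) :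
    Tendsto (fun x : ℝ => eval x p * Real.exp (-x ^ 2)) atTop (nhds 0) := by
  have h : (fun x : ℝ => eval x p * Real.exp (-x ^ 2)) =
      fun x : ℝ => ∑ i ∈ Finset.range (p.natDegree + 1),
        p.coeff i * (x ^ i * Real.exp (-x ^ 2)) := by
    funext x
    rw [eval_eq_sum_range, Finset.sum_mul]
    exact Finset.sum_congr rfl fun i _ => by ring
  rw [h]
  have := tendsto_finset_sum (Finset.range (p.natDegree + 1))
    (fun i _ => ((tendsto_pow_gauss_top i).const_mul (p.coeff i)))
  simpa using this

lemma tendsto_poly_gauss_bot (p : ℝ[X]) :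
    Tendsto (fun x : ℝ => eval x p * Real.exp (-x ^ 2)) atBot (nhds 0) := by
  have h := (tendsto_poly_gauss_top (p.comp (-X))).comp tendsto_neg_atBot_atTop
  have he : (fun x : ℝ => eval x p * Real.exp (-x ^ 2)) =
      (fun x : ℝ => eval x (p.comp (-X)) * Real.exp (-x ^ 2)) ∘ fun x : ℝ => -x := by
    funext x
    simp [Function.comp, eval_comp, neg_sq]
  rw [he]
  exact h

noncomputable def Jg (p : ℝ[X]) : ℝ := ∫ x : ℝ, eval x p * Real.exp (-x ^ 2)

lemma Jg_add (p q : ℝ[X]) : Jg (p + q) = Jg p + Jg q := by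
  rw [Jg, Jg, Jg, ← integral_add (integrable_poly_gauss p) (integrable_poly_gauss q)]
  congr 1
  funext x
  rw [eval_add]
  ring

lemma Jg_Cmul (a : ℝ) (p : ℝ[X]) : Jg (C a * p) = a * Jg p := by
  rw [Jg, Jg, ← integral_const_mul]
  congr 1
  funext x
  rw [eval_mul, eval_C]
  ring

lemma Jg_one : Jg 1 = Real.sqrt π := by
  rw [Jg]
  have := integral_gaussian 1
  simp only [neg_mul, one_mul, div_one] at this
  simpa using this

lemma Jg_X_mul (p : ℝ[X]) : Jg (X * p) = Jg (derivative p) / 2 := by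
  have key : ∫ x : ℝ, (eval x (derivative p) - 2 * (x * eval x p)) * Real.exp (-x ^ 2) = 0 := by
    have hd : ∀ x : ℝ, HasDerivAt (fun x : ℝ => eval x p * Real.exp (-x ^ 2))
        ((eval x (derivative p) - 2 * (x * eval x p)) * Real.exp (-x ^ 2)) x := by
      intro x
      have h1 : HasDerivAt (fun x : ℝ => eval x p) (eval x (derivative p)) x :=
        p.hasDerivAt x
      have h3 : HasDerivAt (fun x : ℝ => -x ^ 2) (-(2 * x)) x := by
        simpa using (hasDerivAt_pow 2 x).fun_neg
      have h2 : HasDerivAt (fun x : ℝ => Real.exp (-x ^ 2))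
          (Real.exp (-x ^ 2) * (-(2 * x))) x := h3.exp
      have := h1.fun_mul h2
      exact this.congr_deriv (by ring)
    have hi : Integrable fun x : ℝ =>
        (eval x (derivative p) - 2 * (x * eval x p)) * Real.exp (-x ^ 2) := by
      have h := integrable_poly_gauss (derivative p - C 2 * (X * p))
      simpa [eval_sub, eval_mul, eval_C, eval_X, mul_assoc] using h
    have h0 := integral_of_hasDerivAt_of_tendsto hd hi
      (tendsto_poly_gauss_bot p) (tendsto_poly_gauss_top p)
    simpa using h0
  have h1 := integrable_poly_gauss (derivative p)
  have h2 := integrable_poly_gauss (X * p)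
  have hsplit : ∫ x : ℝ, (eval x (derivative p) - 2 * (x * eval x p)) * Real.exp (-x ^ 2)
      = (∫ x : ℝ, eval x (derivative p) * Real.exp (-x ^ 2))
        - 2 * ∫ x : ℝ, eval x (X * p) * Real.exp (-x ^ 2) := by
    rw [← integral_const_mul, ← integral_sub h1 (h2.const_mul 2)]
    congr 1
    funext x
    rw [eval_mul, eval_X]
    ring
  rw [hsplit] at key
  rw [Jg, Jg]
  linarith

lemma Jg_neg (p : ℝ[X]) : Jg (-p) = -Jg p := by
  have := Jg_Cmul (-1) p
  simpa using this

lemma Jg_sub (p q : ℝ[X]) : Jg (p - q) = Jg p - Jg q := by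
  rw [sub_eq_add_neg, Jg_add, Jg_neg, sub_eq_add_neg]

noncomputable def cs : ℕ → ℝ
  | 0 => 1
  | 1 => 0
  | (n + 2) => -((n : ℝ) + 1) / 2 * cs n

lemma cs_odd : ∀ k : ℕ, cs (2 * k + 1) = 0 := by
  intro k
  induction k with
  | zero => rfl
  | succ k ih =>
    have h : 2 * (k + 1) + 1 = (2 * k + 1) + 2 := by ring
    rw [h, cs, ih, mul_zero]

lemma oddFactorial_succ (m : ℕ) :
    oddFactorial (m + 1) = oddFactorial m * (2 * (m : ℝ) + 1) := by
  rw [oddFactorial, oddFactorial, Finset.prod_range_succ]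

lemma cs_even : ∀ m : ℕ, cs (2 * m) = (-1) ^ m * oddFactorial m / 2 ^ m := by
  intro m
  induction m with
  | zero => simp [cs, oddFactorial]
  | succ m ih =>
    have h : 2 * (m + 1) = (2 * m) + 2 := by ring
    rw [h, cs, ih, oddFactorial_succ, pow_succ, pow_succ]
    push_cast
    field_simp

lemma Jg_derivative_mul (a b : ℕ) : derivative (Hr a * Hr b)
    = C (a : ℝ) * (Hr (a - 1) * Hr b) + C (b : ℝ) * (Hr a * Hr (b - 1)) := by
  rw [derivative_mul, Hr_deriv, Hr_deriv]
  ring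

lemma Jg_step (a b : ℕ) : Jg (Hr (a + 1) * Hr b)
    = ((b : ℝ) * Jg (Hr a * Hr (b - 1)) - (a : ℝ) * Jg (Hr (a - 1) * Hr b)) / 2 := by
  have hpoly : Hr (a + 1) * Hr b
      = X * (Hr a * Hr b) - C (a : ℝ) * (Hr (a - 1) * Hr b) := by
    rw [Hr_succ, Hr_deriv]
    ring
  rw [hpoly, Jg_sub, Jg_X_mul, Jg_derivative_mul, Jg_add, Jg_Cmul, Jg_Cmul]
  ring

lemma Jg_hermite : ∀ n a b : ℕ, a + b = n →
    Jg (Hr a * Hr b) = (-1) ^ a * Real.sqrt π * cs n := by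
  intro n
  induction n using Nat.strong_induction_on with
  | _ n IH =>
    intro a b hab
    match a, b with
    | 0, 0 =>
      subst hab
      rw [Hr_zero, one_mul, Jg_one]
      simp [cs]
    | 0, (b' + 1) =>
      have hcomm : Hr 0 * Hr (b' + 1) = Hr (b' + 1) * Hr 0 := mul_comm _ _
      rw [hcomm, Jg_step b' 0]
      simp only [Nat.cast_zero, zero_mul, zero_sub, pow_zero, one_mul]
      match b' with
      | 0 =>
        have hn : n = 1 := by omega
        subst hn
        norm_num [cs]
      | (b'' + 1) =>
        have hn : n = b'' + 2 := by omega
        subst hn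
        have hIH := IH b'' (by omega) b'' 0 (by omega)
        rw [show b'' + 1 - 1 = b'' from rfl, hIH]
        rw [cs]
        rcases Nat.even_or_odd b'' with he | ho
        · rw [he.neg_one_pow]
          push_cast
          ring
        · obtain ⟨k, hk⟩ := ho
          subst hk
          rw [cs_odd k]
          push_cast
          ring
    | (a' + 1), b =>
      match a', b, hab with
      | 0, 0, hab =>
        have hn : n = 1 := by omega
        subst hn
        rw [Jg_step 0 0]
        norm_num [cs]
      | a', b, hab =>
        have hn1 : 1 ≤ a' + b ∨ (a' = 0 ∧ b = 0) := by omega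
        rw [Jg_step a' b]
        have hb : (b : ℝ) * Jg (Hr a' * Hr (b - 1))
            = (b : ℝ) * ((-1) ^ a' * Real.sqrt π * cs (a' + b - 1)) := by
          match b with
          | 0 => simp
          | (b'' + 1) =>
            have hIH := IH (a' + b'') (by omega) a' b'' rfl
            rw [show b'' + 1 - 1 = b'' from rfl, show a' + (b'' + 1) - 1 = a' + b'' from by omega,
              hIH]
        have ha : (a' : ℝ) * Jg (Hr (a' - 1) * Hr b)
            = (a' : ℝ) * (-((-1) ^ a' * Real.sqrt π * cs (a' + b - 1))) := by
          match a' with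
          | 0 => simp
          | (a'' + 1) =>
            have hIH := IH (a'' + b) (by omega) a'' b rfl
            rw [show a'' + 1 - 1 = a'' from rfl, show a'' + 1 + b - 1 = a'' + b from by omega,
              hIH, pow_succ]
            ring
        rw [hb, ha]
        rcases hn1 with hge | ⟨h0a, h0b⟩
        · have hn : n = (a' + b - 1) + 2 := by omega
          subst hn
          rw [cs]
          have hcast : ((a' + b - 1 : ℕ) : ℝ) + 1 = (a' : ℝ) + (b : ℝ) := by
            have h2 : (a' + b - 1 : ℕ) + 1 = a' + b := by omega
            calc ((a' + b - 1 : ℕ) : ℝ) + 1 = (((a' + b - 1 : ℕ) + 1 : ℕ) : ℝ) := by push_cast; ring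
              _ = ((a' + b : ℕ) : ℝ) := by rw [h2]
              _ = (a' : ℝ) + (b : ℝ) := by push_cast; ring
          rw [hcast, pow_succ]
          ring
        · subst h0a; subst h0b
          have hn : n = 1 := by omega
          subst hn
          have hcs1 : cs 1 = 0 := cs_odd 0
          rw [hcs1]
          norm_num

lemma itD_eq (n : ℕ) (x : ℝ) : iteratedDeriv n stdNormalPDF x
    = (Real.sqrt (2 * π))⁻¹ * ((-1) ^ n * eval x (Hr n) * Real.exp (-(x ^ 2 / 2))) := by
  have hsd : stdNormalPDF = fun x : ℝ => (Real.sqrt (2 * π))⁻¹ * Real.exp (-(x ^ 2 / 2)) := by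
    funext y
    rw [stdNormalPDF, neg_div]
  have hcd : ContDiff ℝ n fun y : ℝ => Real.exp (-(y ^ 2 / 2)) :=
    Real.contDiff_exp.comp (((contDiff_id.pow 2).div_const 2).neg)
  rw [hsd]
  have h1 : iteratedDeriv n (fun x : ℝ => (Real.sqrt (2 * π))⁻¹ * Real.exp (-(x ^ 2 / 2))) x
      = (Real.sqrt (2 * π))⁻¹ * iteratedDeriv n (fun y : ℝ => Real.exp (-(y ^ 2 / 2))) x := by
    rw [← iteratedDerivWithin_univ, ← iteratedDerivWithin_univ]
    exact iteratedDerivWithin_const_mul (Set.mem_univ x) uniqueDiffOn_univ _ hcd.contDiffWithinAt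
  rw [h1, iteratedDeriv_eq_iterate, Polynomial.deriv_gaussian_eq_hermite_mul_gaussian,
    eval_Hr]

theorem ampw_cor_6_2_2 (s t : ℕ) (hs : 1 ≤ s) :
    2 * Real.sqrt π *
        ∫ x : ℝ, x * iteratedDeriv (2 * s - 1) stdNormalPDF x *
          iteratedDeriv (2 * t) stdNormalPDF x
      = (-1 : ℝ) ^ ((s : ℤ) - t) * (2 : ℝ) ^ (-((s : ℤ) + t)) *
          (2 * (s : ℝ) - 2 * t - 1) * oddFactorial (s + t - 1) := by
  obtain ⟨s', rfl⟩ : ∃ s', s = s' + 1 := ⟨s - 1, by omega⟩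
  rw [show 2 * (s' + 1) - 1 = 2 * s' + 1 from by omega]
  have hpi : Real.sqrt π * Real.sqrt π = π := Real.mul_self_sqrt pi_nonneg
  -- rewrite the integrand
  have hint : ∀ x : ℝ, x * iteratedDeriv (2 * s' + 1) stdNormalPDF x *
      iteratedDeriv (2 * t) stdNormalPDF x
      = (-(2 * π)⁻¹) * (eval x (X * (Hr (2 * s' + 1) * Hr (2 * t))) * Real.exp (-x ^ 2)) := by
    intro x
    rw [itD_eq, itD_eq]
    have e1 : Real.exp (-(x ^ 2 / 2)) * Real.exp (-(x ^ 2 / 2)) = Real.exp (-x ^ 2) := by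
      rw [← Real.exp_add]
      ring_nf
    have e2 : (Real.sqrt (2 * π))⁻¹ * (Real.sqrt (2 * π))⁻¹ = (2 * π)⁻¹ := by
      rw [← mul_inv, Real.mul_self_sqrt (by positivity)]
    have e3 : (-1 : ℝ) ^ (2 * s' + 1) = -1 := Odd.neg_one_pow ⟨s', by ring⟩
    have e4 : (-1 : ℝ) ^ (2 * t) = 1 := Even.neg_one_pow ⟨t, by ring⟩
    rw [e3, e4, eval_mul, eval_X, eval_mul, ← e1, ← e2]
    ring
  have hintegral : (∫ x : ℝ, x * iteratedDeriv (2 * s' + 1) stdNormalPDF x *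
      iteratedDeriv (2 * t) stdNormalPDF x)
      = (-(2 * π)⁻¹) * Jg (X * (Hr (2 * s' + 1) * Hr (2 * t))) := by
    rw [Jg, ← integral_const_mul]
    exact integral_congr_ae (Filter.Eventually.of_forall hint)
  rw [hintegral]
  -- compute the J value
  have hJ : Jg (X * (Hr (2 * s' + 1) * Hr (2 * t)))
      = (((2 * s' + 1 : ℕ) : ℝ) * Jg (Hr (2 * s') * Hr (2 * t))
        + ((2 * t : ℕ) : ℝ) * Jg (Hr (2 * s' + 1) * Hr (2 * t - 1))) / 2 := by
    rw [Jg_X_mul, Jg_derivative_mul, Jg_add, Jg_Cmul, Jg_Cmul]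
    norm_num
  have hA : Jg (Hr (2 * s') * Hr (2 * t)) = Real.sqrt π * cs (2 * (s' + t)) := by
    rw [Jg_hermite (2 * (s' + t)) (2 * s') (2 * t) (by ring), Even.neg_one_pow ⟨s', by ring⟩,
      one_mul]
  have hB : ((2 * t : ℕ) : ℝ) * Jg (Hr (2 * s' + 1) * Hr (2 * t - 1))
      = ((2 * t : ℕ) : ℝ) * (-(Real.sqrt π * cs (2 * (s' + t)))) := by
    match t with
    | 0 => norm_num
    | (t'' + 1) =>
      rw [show 2 * (t'' + 1) - 1 = 2 * t'' + 1 from by omega,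
        Jg_hermite (2 * (s' + (t'' + 1))) (2 * s' + 1) (2 * t'' + 1) (by ring),
        Odd.neg_one_pow ⟨s', by ring⟩]
      ring_nf
  rw [hJ, hA, hB, cs_even]
  -- now pure arithmetic
  have hz1 : (-1 : ℝ) ^ (((s' + 1 : ℕ) : ℤ) - (t : ℤ)) = -(-1 : ℝ) ^ (s' + t) := by
    have h : ((s' + 1 : ℕ) : ℤ) - (t : ℤ) = ((s' + t + 1 : ℕ) : ℤ) - 2 * (t : ℤ) := by
      push_cast; ring
    rw [h, zpow_sub₀ (by norm_num : (-1 : ℝ) ≠ 0), zpow_natCast]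
    have h2 : (-1 : ℝ) ^ (2 * (t : ℤ)) = 1 := by
      rw [zpow_mul]
      norm_num
    rw [h2, div_one, pow_succ]
    ring
  have hz2 : (2 : ℝ) ^ (-(((s' + 1 : ℕ) : ℤ) + (t : ℤ))) = ((2 : ℝ) ^ (s' + t + 1))⁻¹ := by
    rw [zpow_neg]
    congr 1
    rw [show ((s' + 1 : ℕ) : ℤ) + (t : ℤ) = ((s' + t + 1 : ℕ) : ℤ) from by push_cast; ring,
      zpow_natCast]
  rw [show s' + 1 + t - 1 = s' + t from by omega, hz1, hz2]
  push_cast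
  rw [show (2 : ℝ) * π = (2 * Real.sqrt π) * Real.sqrt π from by rw [mul_assoc, hpi]]
  have hsq : Real.sqrt π ≠ 0 := by positivity
  field_simp
  ring

end AuxAMPW
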